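/- Let B be a k × n rectangular Flood-It board with colours from a set C of size c, let G_B be its associated coloured graph, and let u and v be vertices of G_B corresponding to squares incident with the left-hand and right-hand edges of the board respectively. Then m_{G_B}(u,v) ≤ m(B) ≤ m_{G_B}(u,v) + c(k−1), where m(B) is the minimum number of moves to flood the whole board and m_{G_B}(u,v) is the minimum number of moves to link u and v. -/

import Mathlib

namespace Flood

variable {V C : Type*}

/-- Two vertices are joined by an edge inside a monochromatic class. -/
def monoAdj (G : SimpleGraph V) (ω : V → C) (a b : V) : Prop :=
  G.Adj a b ∧ ω a = ω b

/-- `u` and `v` lie in a common monochromatic component of the colouring `ω`. -/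
def monoLinked (G : SimpleGraph V) (ω : V → C) (u v : V) : Prop :=
  Relation.ReflTransGen (monoAdj G ω) u v

/-- One flooding move: recolour the monochromatic component of `v` with colour `d`. -/
noncomputable def floodMove (G : SimpleGraph V) (ω : V → C) (v : V) (d : C) : V → C :=
  fun u => @ite _ (monoLinked G ω v u) (Classical.propDecidable _) d (ω u)

/-- Apply a sequence of flooding moves. -/
noncomputable def floodSeq (G : SimpleGraph V) (ω : V → C) (S : List (V × C)) : V → C :=
  S.foldl (fun ω' m => floodMove G ω' m.1 m.2) ω

/-- The sequence `S` floods `G`, i.e. makes it monochromatic. -/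
def Floods (G : SimpleGraph V) (ω : V → C) (S : List (V × C)) : Prop :=
  ∀ a b, floodSeq G ω S a = floodSeq G ω S b

/-- Minimum number of moves needed to make `G` monochromatic. -/
noncomputable def floodCost (G : SimpleGraph V) (ω : V → C) : ℕ :=
  sInf {k | ∃ S, S.length = k ∧ Floods G ω S}

/-- Minimum number of moves needed to make `G` monochromatic in colour `d`. -/
noncomputable def floodCostIn (G : SimpleGraph V) (ω : V → C) (d : C) : ℕ :=
  sInf {k | ∃ S, S.length = k ∧ ∀ a, floodSeq G ω S a = d}

/-- The sequence `S` links `u` and `v`. -/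
def Links (G : SimpleGraph V) (ω : V → C) (S : List (V × C)) (u v : V) : Prop :=
  monoLinked G (floodSeq G ω S) u v

/-- Minimum number of moves needed to link `u` and `v`. -/
noncomputable def linkCost (G : SimpleGraph V) (ω : V → C) (u v : V) : ℕ :=
  sInf {k | ∃ S, S.length = k ∧ Links G ω S u v}

/-- Minimum number of moves needed to link `u` and `v` in a monochromatic
component of colour `d`. -/
noncomputable def linkCostIn (G : SimpleGraph V) (ω : V → C) (u v : V) (d : C) : ℕ :=
  sInf {k | ∃ S, S.length = k ∧ Links G ω S u v ∧ floodSeq G ω S u = d}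


/-- The `k × n` grid graph (squares adjacent horizontally or vertically). -/
def gridGraph (k n : ℕ) : SimpleGraph (Fin k × Fin n) :=
  SimpleGraph.fromRel (fun a b =>
    (a.1 = b.1 ∧ a.2.val + 1 = b.2.val) ∨ (a.2 = b.2 ∧ a.1.val + 1 = b.1.val))

end Flood

open Flood


namespace FloodAux

open Relation

variable {V C : Type*} {G : SimpleGraph V} {ω : V → C} {u x y : V}

lemma mono_colour (h : monoLinked G ω u x) : ω x = ω u := by
  induction h with
  | refl => rfl
  | tail _ hab ih => rw [← hab.2]; exact ih

lemma linked_move (d : C) (h : monoLinked G ω u x) :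
    monoLinked G (floodMove G ω u d) u x := by
  induction h with
  | refl => exact .refl
  | @tail b c hb hab ih =>
      refine ih.tail ⟨hab.1, ?_⟩
      have h1 : monoLinked G ω u b := hb
      have h2 : monoLinked G ω u c := hb.tail hab
      show floodMove G ω u d b = floodMove G ω u d c
      unfold floodMove
      rw [if_pos h1, if_pos h2]

lemma absorb (hyx : G.Adj y x) (hy : monoLinked G ω u y) :
    monoLinked G (floodMove G ω u (ω x)) u x := by
  by_cases hx : monoLinked G ω u x
  · exact linked_move _ hx
  · refine (linked_move (ω x) hy).tail ⟨hyx, ?_⟩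
    show floodMove G ω u (ω x) y = floodMove G ω u (ω x) x
    unfold floodMove
    rw [if_pos hy, if_neg hx]

/-- Fold a list of colours, each time recolouring the component of `u`. -/
noncomputable def roundFold (G : SimpleGraph V) (u : V) (L : List C) (ω : V → C) : V → C :=
  L.foldl (fun ω' d => floodMove G ω' u d) ω

lemma roundFold_append (L1 L2 : List C) (ω : V → C) :
    roundFold G u (L1 ++ L2) ω = roundFold G u L2 (roundFold G u L1 ω) :=
  List.foldl_append

lemma floodSeq_movesOf (L : List C) (ω : V → C) :
    floodSeq G ω (L.map fun d => (u, d)) = roundFold G u L ω := by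
  simp [floodSeq, roundFold, List.foldl_map]

lemma floodSeq_append (S T : List (V × C)) (ω : V → C) :
    floodSeq G ω (S ++ T) = floodSeq G (floodSeq G ω S) T :=
  List.foldl_append

lemma linked_roundFold (L : List C) : ∀ (ω : V → C), monoLinked G ω u x →
    monoLinked G (roundFold G u L ω) u x := by
  induction L with
  | nil => exact fun ω h => h
  | cons d L ih => exact fun ω h => ih _ (linked_move d h)

lemma absorb_list (hyx : G.Adj y x) : ∀ (L : List C) (ω : V → C),
    monoLinked G ω u y → ω x ∈ L → monoLinked G (roundFold G u L ω) u x := by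
  intro L
  induction L with
  | nil => intro ω _ h; simp at h
  | cons d L ih =>
      intro ω hy hmem
      by_cases hx : monoLinked G ω u x
      · exact linked_roundFold _ _ hx
      · by_cases hd : ω x = d
        · subst hd
          exact linked_roundFold L _ (absorb hyx hy)
        · have hmem' : ω x ∈ L := by
            rcases List.mem_cons.1 hmem with h | h
            · exact absurd h hd
            · exact h
          have hy' : monoLinked G (floodMove G ω u d) u y := linked_move d hy
          have hx' : floodMove G ω u d x = ω x := by
            unfold floodMove; rw [if_neg hx]
          have := ih (floodMove G ω u d) hy' (by rw [hx']; exact hmem')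
          exact this

/-- `x` is within distance `m` of the monochromatic component of `u`. -/
def near (G : SimpleGraph V) (ω : V → C) (u : V) : ℕ → V → Prop
  | 0, x => monoLinked G ω u x
  | m+1, x => near G ω u m x ∨ ∃ y, near G ω u m y ∧ G.Adj y x

lemma near_mono {m : ℕ} (h : near G ω u m x) : near G ω u (m+1) x := Or.inl h

lemma near_le {m : ℕ} : ∀ {m' : ℕ}, m ≤ m' → near G ω u m x → near G ω u m' x := by
  intro m'
  induction m' with
  | zero =>
      intro hle h
      have : m = 0 := by omega
      subst this; exact h
  | succ m'' ih =>
      intro hle h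
      rcases Nat.lt_or_ge m (m''+1) with h1 | h1
      · exact Or.inl (ih (by omega) h)
      · have : m = m'' + 1 := by omega
        subst this; exact h

lemma near_step {m : ℕ} (h : near G ω u m y) (a : G.Adj y x) : near G ω u (m+1) x :=
  Or.inr ⟨y, h, a⟩

lemma round_near (L : List C) (hL : ∀ d : C, d ∈ L) :
    ∀ (m : ℕ) (x : V) (ω : V → C), near G ω u (m+1) x →
      near G (roundFold G u L ω) u m x := by
  intro m
  induction m with
  | zero =>
      intro x ω h
      rcases h with h | ⟨y, hy, a⟩
      · exact linked_roundFold _ _ h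
      · exact absorb_list a L ω hy (hL _)
  | succ m ih =>
      intro x ω h
      rcases h with h | ⟨y, hy, a⟩
      · exact Or.inl (ih x ω h)
      · exact Or.inr ⟨y, ih y ω hy, a⟩

lemma rounds_flood (L : List C) (hL : ∀ d : C, d ∈ L) :
    ∀ (m : ℕ) (ω : V → C) (x : V), near G ω u m x →
      monoLinked G (roundFold G u ((List.replicate m L).flatten) ω) u x := by
  intro m
  induction m with
  | zero => intro ω x h; exact h
  | succ m ih =>
      intro ω x h
      have : (List.replicate (m+1) L).flatten = L ++ (List.replicate m L).flatten := by
        simp [List.replicate_succ]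
      rw [this, roundFold_append]
      exact ih _ x (round_near L hL m x ω h)

end FloodAux

section Grid

open FloodAux Relation

variable {k n : ℕ}

lemma grid_adj_vert (a b : Fin k) (j : Fin n) (h : a.val + 1 = b.val) :
    (gridGraph k n).Adj (a, j) (b, j) := by
  have hne : (a, j) ≠ (b, j) := by
    intro he
    have h1 : a = b := (Prod.mk.injEq _ _ _ _ ▸ he).1
    have := congrArg Fin.val h1
    omega
  simp only [gridGraph, SimpleGraph.fromRel_adj]
  exact ⟨hne, Or.inl (Or.inr ⟨trivial, h⟩)⟩

lemma grid_adj_horiz (i : Fin k) (a b : Fin n) (h : a.val + 1 = b.val) :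
    (gridGraph k n).Adj (i, a) (i, b) := by
  have hne : (i, a) ≠ (i, b) := by
    intro he
    have h1 : a = b := (Prod.mk.injEq _ _ _ _ ▸ he).2
    have := congrArg Fin.val h1
    omega
  simp only [gridGraph, SimpleGraph.fromRel_adj]
  exact ⟨hne, Or.inl (Or.inl ⟨trivial, h⟩)⟩

lemma grid_adj_col_bound {a b : Fin k × Fin n} (h : (gridGraph k n).Adj a b) :
    a.2.val ≤ b.2.val + 1 ∧ b.2.val ≤ a.2.val + 1 := by
  simp only [gridGraph, SimpleGraph.fromRel_adj] at h
  rcases h.2 with (⟨_, h2⟩ | ⟨h2, _⟩) | (⟨_, h2⟩ | ⟨h2, _⟩)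
  · omega
  · have := congrArg Fin.val h2; omega
  · omega
  · have := congrArg Fin.val h2; omega

/-- Generic vertical-chain stepping lemma. -/
lemma vert_chain (P : ℕ → (Fin k × Fin n) → Prop)
    (mono : ∀ m x, P m x → P (m+1) x)
    (step : ∀ m y x, P m y → (gridGraph k n).Adj y x → P (m+1) x) :
    ∀ (t : ℕ) (a b : Fin k) (j : Fin n) (m : ℕ), b.val ≤ a.val + t → a.val ≤ b.val + t →
      P m (a, j) → P (m + t) (b, j) := by
  intro t
  induction t with
  | zero =>
      intro a b j m h1 h2 h
      have : a = b := Fin.ext (by omega)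
      subst this; exact h
  | succ t ih =>
      intro a b j m h1 h2 h
      rcases Nat.lt_trichotomy a.val b.val with hlt | heq | hgt
      · set a' : Fin k := ⟨a.val + 1, by omega⟩ with ha'
        have hadj : (gridGraph k n).Adj (a, j) (a', j) := grid_adj_vert a a' j rfl
        have h' : P (m+1) (a', j) := step m _ _ h hadj
        have := ih a' b j (m+1) (by simp [ha']; omega) (by simp [ha']; omega) h'
        have he : m + 1 + t = m + (t+1) := by omega
        rwa [he] at this
      · have : a = b := Fin.ext heq
        subst this
        have := mono (m + t) (a, j) (ih a a j m (by omega) (by omega) h)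
        rwa [show m + t + 1 = m + (t+1) by omega] at this
      · set a' : Fin k := ⟨a.val - 1, by omega⟩ with ha'
        have hadj : (gridGraph k n).Adj (a, j) (a', j) :=
          ((gridGraph k n).adj_symm (grid_adj_vert a' a j (by simp [ha']; omega)))
        have h' : P (m+1) (a', j) := step m _ _ h hadj
        have := ih a' b j (m+1) (by simp [ha']; omega) (by simp [ha']; omega) h'
        have he : m + 1 + t = m + (t+1) := by omega
        rwa [he] at this

/-- Generic horizontal-chain stepping lemma. -/
lemma horiz_chain (P : ℕ → (Fin k × Fin n) → Prop)
    (mono : ∀ m x, P m x → P (m+1) x)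
    (step : ∀ m y x, P m y → (gridGraph k n).Adj y x → P (m+1) x) :
    ∀ (t : ℕ) (i : Fin k) (a b : Fin n) (m : ℕ), b.val ≤ a.val + t → a.val ≤ b.val + t →
      P m (i, a) → P (m + t) (i, b) := by
  intro t
  induction t with
  | zero =>
      intro i a b m h1 h2 h
      have : a = b := Fin.ext (by omega)
      subst this; exact h
  | succ t ih =>
      intro i a b m h1 h2 h
      rcases Nat.lt_trichotomy a.val b.val with hlt | heq | hgt
      · set a' : Fin n := ⟨a.val + 1, by omega⟩ with ha'
        have hadj : (gridGraph k n).Adj (i, a) (i, a') := grid_adj_horiz i a a' rfl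
        have h' : P (m+1) (i, a') := step m _ _ h hadj
        have := ih i a' b (m+1) (by simp [ha']; omega) (by simp [ha']; omega) h'
        have he : m + 1 + t = m + (t+1) := by omega
        rwa [he] at this
      · have : a = b := Fin.ext heq
        subst this
        have := mono (m + t) (i, a) (ih i a a m (by omega) (by omega) h)
        rwa [show m + t + 1 = m + (t+1) by omega] at this
      · set a' : Fin n := ⟨a.val - 1, by omega⟩ with ha'
        have hadj : (gridGraph k n).Adj (i, a) (i, a') :=
          ((gridGraph k n).adj_symm (grid_adj_horiz i a' a (by simp [ha']; omega)))
        have h' : P (m+1) (i, a') := step m _ _ h hadj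
        have := ih i a' b (m+1) (by simp [ha']; omega) (by simp [ha']; omega) h'
        have he : m + 1 + t = m + (t+1) := by omega
        rwa [he] at this

variable {C : Type*} {ω : Fin k × Fin n → C} {u : Fin k × Fin n}

lemma column_witness {a : Fin k × Fin n} (h : monoLinked (gridGraph k n) ω u a) :
    ∀ j : ℕ, u.2.val ≤ j → j ≤ a.2.val →
      ∃ w, monoLinked (gridGraph k n) ω u w ∧ w.2.val = j := by
  induction h with
  | refl => intro j h1 h2; exact ⟨u, .refl, by omega⟩
  | @tail b c hb hab ih =>
      intro j h1 h2
      rcases le_or_gt j b.2.val with hle | hgt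
      · exact ih j h1 hle
      · have hbound := grid_adj_col_bound hab.1
        exact ⟨c, hb.tail hab, by omega⟩

end Grid


section Main

open FloodAux

/-- Playing every colour `m` times floods, provided every vertex is within
distance `m` of the component of `u`. -/
lemma rounds_floods {k n c : ℕ} (u : Fin k × Fin n) (ω' : Fin k × Fin n → Fin c) (m : ℕ)
    (h : ∀ x, near (gridGraph k n) ω' u m x) :
    Floods (gridGraph k n) ω'
      (((List.replicate m (List.finRange c)).flatten).map fun d => (u, d)) := by
  intro a b
  rw [floodSeq_movesOf]
  have ha := mono_colour
    (rounds_flood (List.finRange c) (fun d => List.mem_finRange d) m ω' a (h a))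
  have hb := mono_colour
    (rounds_flood (List.finRange c) (fun d => List.mem_finRange d) m ω' b (h b))
  rw [ha, hb]

lemma rounds_length {c m : ℕ} (u : Fin k × Fin n) :
    (((List.replicate m (List.finRange c)).flatten).map
      fun d => ((u, d) : (Fin k × Fin n) × Fin c)).length = m * c := by
  simp

theorem board_flood_approx' (k n c : ℕ) (ω : Fin k × Fin n → Fin c)
    (u v : Fin k × Fin n) (hu : u.2.val = 0) (hv : v.2.val = n - 1) :
    linkCost (gridGraph k n) ω u v ≤ floodCost (gridGraph k n) ω ∧
    floodCost (gridGraph k n) ω ≤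
      linkCost (gridGraph k n) ω u v + c * (k - 1) := by
  classical
  set G := gridGraph k n with hG
  have hk : 0 < k := u.1.pos
  have hn : 0 < n := u.2.pos
  -- distance-m neighbourhoods of u cover everything, for a suitable m
  have near_all : ∀ (ω' : Fin k × Fin n → Fin c) (x : Fin k × Fin n),
      near G ω' u ((n-1) + (k-1)) x := by
    intro ω' x
    have h0 : near G ω' u 0 (u.1, u.2) := Relation.ReflTransGen.refl
    have h1 : near G ω' u (0 + (n-1)) (u.1, x.2) :=
      horiz_chain (near G ω' u) (fun _ _ h => near_mono h)
        (fun _ _ _ h a => near_step h a) (n-1) u.1 u.2 x.2 0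
        (by have := x.2.isLt; omega) (by have := x.2.isLt; omega) h0
    have h2 : near G ω' u (0 + (n-1) + (k-1)) (x.1, x.2) :=
      vert_chain (near G ω' u) (fun _ _ h => near_mono h)
        (fun _ _ _ h a => near_step h a) (k-1) u.1 x.1 x.2 (0 + (n-1))
        (by have := x.1.isLt; have := u.1.isLt; omega)
        (by have := x.1.isLt; have := u.1.isLt; omega) h1
    simpa using h2
  -- flooding is possible, so the flood set is nonempty
  have flood_ne : {m | ∃ S, S.length = m ∧ Floods G ω S}.Nonempty := by
    refine ⟨_, _, rfl, rounds_floods u ω ((n-1) + (k-1)) (near_all ω)⟩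
  obtain ⟨Sf, hSfl, hSf⟩ := Nat.sInf_mem flood_ne
  -- every flooding sequence links u and v
  have hlinks : Links G ω Sf u v := by
    set κ := floodSeq G ω Sf with hκ
    have hstep : ∀ (m : ℕ) (y x : Fin k × Fin n),
        monoLinked G κ u y → G.Adj y x → monoLinked G κ u x :=
      fun _ y x h a => h.tail ⟨a, hSf y x⟩
    have h1 : monoLinked G κ u (u.1, v.2) :=
      horiz_chain (fun _ x => monoLinked G κ u x) (fun _ _ h => h) hstep
        (n-1) u.1 u.2 v.2 0
        (by have := v.2.isLt; omega) (by have := v.2.isLt; omega)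
        (Relation.ReflTransGen.refl)
    have h2 : monoLinked G κ u (v.1, v.2) :=
      vert_chain (fun _ x => monoLinked G κ u x) (fun _ _ h => h) hstep
        (k-1) u.1 v.1 v.2 0
        (by have := v.1.isLt; have := u.1.isLt; omega)
        (by have := v.1.isLt; have := u.1.isLt; omega) h1
    exact h2
  have link_ne : {m | ∃ S, S.length = m ∧ Links G ω S u v}.Nonempty :=
    ⟨Sf.length, Sf, rfl, hlinks⟩
  constructor
  · -- linkCost ≤ floodCost
    rw [linkCost, floodCost, ← hSfl]
    exact Nat.sInf_le ⟨Sf, rfl, hlinks⟩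
  · -- floodCost ≤ linkCost + c * (k-1)
    obtain ⟨Sl, hSll, hSl⟩ := Nat.sInf_mem link_ne
    set ω' := floodSeq G ω Sl with hω'
    -- after linking, everything is within distance k-1 of the component of u
    have hnear : ∀ x, near G ω' u (k-1) x := by
      intro x
      obtain ⟨w, hw, hwj⟩ := column_witness hSl x.2.val (by omega)
        (by have := x.2.isLt; omega)
      have hw2 : w.2 = x.2 := Fin.ext hwj
      have h0 : near G ω' u 0 (w.1, x.2) := by
        rw [← hw2]
        exact hw
      have h2 : near G ω' u (0 + (k-1)) (x.1, x.2) :=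
        vert_chain (near G ω' u) (fun _ _ h => near_mono h)
          (fun _ _ _ h a => near_step h a) (k-1) w.1 x.1 x.2 0
          (by have := x.1.isLt; have := w.1.isLt; omega)
          (by have := x.1.isLt; have := w.1.isLt; omega) h0
      simpa using h2
    set T := Sl ++ (((List.replicate (k-1) (List.finRange c)).flatten).map
      fun d => ((u, d) : (Fin k × Fin n) × Fin c)) with hT
    have hfloods : Floods G ω T := by
      intro a b
      rw [hT, floodSeq_append]
      exact rounds_floods u ω' (k-1) hnear a b
    have hTlen : T.length = linkCost G ω u v + c * (k-1) := by
      rw [hT, List.length_append, hSll, rounds_length, Nat.mul_comm, linkCost]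
    rw [floodCost, ← hTlen]
    exact Nat.sInf_le ⟨T, rfl, hfloods⟩

end Main

/-- for a `k × n` board with `c` colours and vertices `u`, `v` on
the left- and right-hand edges respectively,
`m(u,v) ≤ m(B) ≤ m(u,v) + c(k-1)`. -/
theorem board_flood_approx (k n c : ℕ) (ω : Fin k × Fin n → Fin c)
    (u v : Fin k × Fin n) (hu : u.2.val = 0) (hv : v.2.val = n - 1) :
    linkCost (gridGraph k n) ω u v ≤ floodCost (gridGraph k n) ω ∧
    floodCost (gridGraph k n) ω ≤
      linkCost (gridGraph k n) ω u v + c * (k - 1) :=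
  board_flood_approx' k n c ω u v hu hv
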